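/- Let G = (V, E) be an edge-labeled DAG with labels c : E → ℝ and let j be an intermediate vertex with predecessor set P(j) = {i_1, …, i_p}. Then performing front elimination of the edges (i_1, j), (i_2, j), …, (i_p, j) consecutively (each step applied to the graph produced by the previous step, with the removal of j and its outgoing edges occurring at the last step) produces exactly the graph G − j obtained by vertex elimination of j, with identical vertex set, edge set and edge labels; in particular the result is independent of the order in which the incoming edges of j are eliminated. -/

import Mathlib

open scoped Classical

/-- Adjacency after front elimination of the edge `(i,j)`: for every successor `k` of
`j` the (possibly fill) edge `(i,k)` is inserted, the edge `(i,j)` is removed, and if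
`j` thereby has no incoming edges left, `j` is removed (isolated) together with its
outgoing edges. -/
def frontAdj {V : Type*} [Fintype V] [DecidableEq V] (A : V → V → Bool) (i j : V) :
    V → V → Bool :=
  fun x y =>
    let A1 : V → V → Bool := fun x y =>
      if x = i ∧ y = j then false else (A x y || (decide (x = i) && A j y))
    if ∀ u, u ≠ i → A u j = false then
      (A1 x y && !decide (x = j) && !decide (y = j))
    else A1 x y

/-- Labels after front elimination of `(i,j)`: for every successor `k` of `j` the
label of `(i,k)` becomes `c i k + c j k * c i j` if `(i,k)` was an edge and
`c j k * c i j` for a fill edge; all other edges keep their labels. -/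
noncomputable def frontLab {V : Type*} [DecidableEq V] (A : V → V → Bool)
    (c : V → V → ℝ) (i j : V) : V → V → ℝ :=
  fun x y =>
    if x = i ∧ A j y then
      (if A x y then c x y + c j y * c x j else c j y * c x j)
    else c x y

/-- Adjacency after vertex elimination of `j`: the vertex `j` is isolated (removed),
all other edges are kept, and for every predecessor `i` and successor `k` of `j`
the (possibly fill) edge `(i,k)` is present. -/
def elimAdj {V : Type*} [DecidableEq V] (A : V → V → Bool) (j : V) : V → V → Bool :=
  fun x y => !decide (x = j) && !decide (y = j) && (A x y || (A x j && A j y))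

/-- Labels after vertex elimination of `j`: for a predecessor `i` and successor `k`
of `j` the label of `(i,k)` becomes `c i k + c j k * c i j` if `(i,k)` was an edge,
and `c j k * c i j` for a fill edge; all other edges keep their labels. -/
noncomputable def elimLab {V : Type*} [DecidableEq V] (A : V → V → Bool)
    (c : V → V → ℝ) (j : V) : V → V → ℝ :=
  fun x y =>
    if A x j ∧ A j y then
      (if A x y then c x y + c j y * c x j else c j y * c x j)
    else c x y


section AuxFE
variable {V : Type*} [Fintype V] [DecidableEq V]

/-- Intermediate adjacency after front-eliminating the edges `(i,j)` for the
predecessors `i` in the set `s` (a proper subset of the predecessors of `j`). -/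
def Baux (A : V → V → Bool) (j : V) (s : V → Bool) : V → V → Bool :=
  fun x y => (A x y && !(s x && decide (y = j))) || (s x && A j y)

/-- Intermediate labels after front-eliminating the edges `(i,j)` for `i ∈ s`. -/
noncomputable def Laux (A : V → V → Bool) (c : V → V → ℝ) (j : V) (s : V → Bool) :
    V → V → ℝ :=
  fun x y =>
    if s x ∧ A j y then
      (if A x y then c x y + c j y * c x j else c j y * c x j)
    else c x y

lemma foldl_aux (A : V → V → Bool) (c : V → V → ℝ) (j : V) (hjj : A j j = false)
    (m : List V) (hne : m ≠ []) (hnd : m.Nodup) (s : V → Bool)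
    (hm : ∀ i ∈ m, A i j = true ∧ s i = false)
    (hcov : ∀ u, A u j = true → s u = true ∨ u ∈ m)
    (hsub : ∀ u, s u = true → A u j = true) :
    m.foldl (fun p i => (frontAdj p.1 i j, frontLab p.1 p.2 i j))
      (Baux A j s, Laux A c j s)
      = (elimAdj A j, Laux A c j (fun u => A u j)) := by
  induction m generalizing s with
  | nil => exact absurd rfl hne
  | cons i r ih =>
    have hsj : s j = false := by
      cases h : s j with
      | false => rfl
      | true => exact absurd (hsub j h) (by simp [hjj])
    obtain ⟨hAij, hsi⟩ := hm i List.mem_cons_self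
    have hinr : i ∉ r := (List.nodup_cons.mp hnd).1
    set s' : V → Bool := fun u => s u || decide (u = i) with hs'def
    -- the label update is the same in every case
    have hlab : frontLab (Baux A j s) (Laux A c j s) i j = Laux A c j s' := by
      funext x y
      by_cases hx : x = i
      · subst hx
        cases hjy : A j y with
        | false => simp [frontLab, Laux, Baux, hsj, hjy, hsi, hs'def]
        | true =>
          have hyj : y ≠ j := fun h => by subst h; rw [hjj] at hjy; exact Bool.noConfusion hjy
          simp [frontLab, Laux, Baux, hsj, hjy, hsi, hjj, hyj, hs'def]
      · simp [frontLab, Laux, Baux, hx, hs'def]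
    match r, hnd with
    | [], _ =>
      -- last step: the removal condition fires and we get `elimAdj`
      have hs' : ∀ u, s' u = A u j := by
        intro u
        cases hAu : A u j with
        | true =>
          rcases hcov u hAu with h | h
          · simp [hs'def, h]
          · simp only [List.mem_singleton] at h
            simp [hs'def, h]
        | false =>
          have h1 : s u = false := by
            cases h : s u with
            | false => rfl
            | true => rw [hsub u h] at hAu; exact Bool.noConfusion hAu
          have h2 : u ≠ i := fun h => by subst h; rw [hAij] at hAu; exact Bool.noConfusion hAu
          simp [hs'def, h1, h2]
      have hC : ∀ u, u ≠ i → Baux A j s u j = false := by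
        intro u hu
        have hA : A u j = true → s u = true := by
          intro h
          rcases hcov u h with h' | h'
          · exact h'
          · simp only [List.mem_singleton] at h'
            exact absurd h' hu
        simp only [Baux, decide_true, Bool.and_true, hjj, Bool.and_false, Bool.or_false]
        cases hAu : A u j with
        | false => simp
        | true => simp [hA hAu]
      have hadj : frontAdj (Baux A j s) i j = elimAdj A j := by
        funext x y
        simp only [frontAdj, if_pos hC, elimAdj]
        by_cases hxj : x = j
        · simp [hxj]
        by_cases hyj : y = j
        · simp [hyj]
        have hxi : (s x || decide (x = i)) = A x j := hs' x
        have hBjy : Baux A j s j y = A j y := by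
          simp [Baux, hsj, hjj]
        have hBxy : Baux A j s x y = (A x y || (s x && A j y)) := by
          simp [Baux, hyj]
        rw [if_neg (fun h => hyj h.2), hBjy, hBxy, ← hxi]
        simp only [decide_eq_false hxj, decide_eq_false hyj, Bool.not_false, Bool.and_true]
        cases A x y <;> cases A j y <;> cases s x <;> cases decide (x = i) <;> simp
      simp only [List.foldl_cons, List.foldl_nil, hlab, hadj]
      congr 1
      funext x y
      simp only [Laux, hs' x]
    | k :: r', hnd2 =>
      -- not the last step: the removal condition does not fire
      have hk := hm k (by simp)
      have hki : k ≠ i := by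
        rintro rfl
        exact hinr (by simp)
      have hCfalse : ¬ ∀ u, u ≠ i → Baux A j s u j = false := by
        intro h
        have := h k hki
        simp [Baux, hjj, hk.1, hk.2] at this
      have hadj : frontAdj (Baux A j s) i j = Baux A j s' := by
        funext x y
        simp only [frontAdj, if_neg hCfalse]
        by_cases hxy : x = i ∧ y = j
        · obtain ⟨rfl, rfl⟩ := hxy
          simp [Baux, hjj, hAij, hs'def]
        · rw [if_neg hxy]
          by_cases hx : x = i
          · subst hx
            have hyj : y ≠ j := fun h => hxy ⟨rfl, h⟩
            cases hb1 : A x y <;> cases hb2 : A j y <;>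
              simp [Baux, hs'def, hsj, hyj, hsi, hb1, hb2, hjj]
          · simp only [Baux, hs'def, decide_eq_false hx, Bool.and_false, Bool.false_and,
              Bool.or_false]
      rw [List.foldl_cons, hlab, hadj]
      exact ih (by simp) (List.nodup_cons.mp hnd2).2
        s'
        (by
          intro u hu
          have h := hm u (List.mem_cons_of_mem _ hu)
          have hui : u ≠ i := fun h' => by subst h'; exact hinr hu
          refine ⟨h.1, ?_⟩
          simp [hs'def, h.2, hui])
        (by
          intro u hu
          rcases hcov u hu with h | h
          · exact Or.inl (by simp [hs'def, h])
          · rcases List.mem_cons.mp h with rfl | h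
            · exact Or.inl (by simp [hs'def])
            · exact Or.inr h)
        (by
          intro u hu
          simp only [hs'def, Bool.or_eq_true, decide_eq_true_eq] at hu
          rcases hu with h | rfl
          · exact hsub u h
          · exact hAij)

end AuxFE

/-- **Vertex elimination is an order-independent sequence of front edge eliminations**:
for an intermediate vertex `j` of an edge-labeled dag `G`, consecutively
front-eliminating the edges `(i₁,j), …, (i_p,j)` for any duplicate-free enumeration
`l = [i₁, …, i_p]` of the predecessor set `P(j)` (each step applied to the graph
produced by the previous one; the removal of `j` and its outgoing edges happens
automatically at the last step) produces exactly the graph `G − j` obtained by vertex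
elimination of `j`: the same edge set and the same labels on all its edges.
In particular, the result is independent of the elimination order. -/
theorem vertex_elimination_is_iterated_front_elimination
    {V : Type*} [Fintype V] [DecidableEq V]
    (A : V → V → Bool) (c : V → V → ℝ)
    (f : V → ℕ) (hacyc : ∀ a b, A a b = true → f a < f b)
    (j : V) (hpred : ∃ i, A i j = true) (hsucc : ∃ k, A j k = true)
    (l : List V) (hnd : l.Nodup) (hl : ∀ i, i ∈ l ↔ A i j = true)
    (G' : (V → V → Bool) × (V → V → ℝ))
    (hG' : G' = l.foldl (fun p i => (frontAdj p.1 i j, frontLab p.1 p.2 i j)) (A, c)) :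
    G'.1 = elimAdj A j ∧
    ∀ x y, elimAdj A j x y = true → G'.2 x y = elimLab A c j x y := by
  have hjj : A j j = false := by
    cases h : A j j with
    | false => rfl
    | true => exact absurd (hacyc j j h) (lt_irrefl _)
  obtain ⟨i0, hi0⟩ := hpred
  have hne : l ≠ [] := List.ne_nil_of_mem ((hl i0).mpr hi0)
  have hB0 : Baux A j (fun _ => false) = A := by funext x y; simp [Baux]
  have hL0 : Laux A c j (fun _ => false) = c := by funext x y; simp [Laux]
  have key := foldl_aux A c j hjj l hne hnd (fun _ => false)
    (fun i hi => ⟨(hl i).mp hi, rfl⟩)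
    (fun u hu => Or.inr ((hl u).mpr hu))
    (by simp)
  rw [hB0, hL0] at key
  rw [hG', key]
  refine ⟨rfl, fun x y _ => ?_⟩
  simp [Laux, elimLab]
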